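/- Let (a_n)_{n≥0} with a_0 = 0, a_n > 0 for n ≥ 1, satisfy the q-discrete Painlevé I equation q^{n-1}(1 - q^n) = a_n²(a_{n+1}² + q^{-n+1}a_n² + q²a_{n-1}² + q^{-2n+3}a_{n+1}²a_n²a_{n-1}²) for all n ≥ 1, where 0 < q < 1. Then a_n⁴ ≤ q^{2n-2}(1 - q^n) for all n ≥ 1, a_n → 0, and lim_{n→∞} a_n²/q^{n-1} = 1. -/

import Mathlib

open Filter Topology

/-- Auxiliary: the normalized sequence `yₙ = aₙ² q^{1-n}`. -/
noncomputable def qPI_Y (q : ℝ) (a : ℕ → ℝ) (n : ℕ) : ℝ := (a n) ^ 2 * q ^ (1 - (n : ℤ))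

lemma qPI_core (q p A B C : ℝ) (hq : q ≠ 0) (hp : p ≠ 0)
    (H : p * (1 - q * p) = A * (B + p⁻¹ * A + q ^ 2 * C + (q * (p⁻¹) ^ 2) * B * A * C)) :
    1 - (A * p⁻¹) ^ 2
      = (p * q) * ((1 + (B * (p * q)⁻¹) * (A * p⁻¹)) * (1 + (C * (q * p⁻¹)) * (A * p⁻¹))) := by
  field_simp at H ⊢
  linear_combination H

theorem qPI_asymptotics (q : ℝ) (hq0 : 0 < q) (hq1 : q < 1)
    (a : ℕ → ℝ)
    (ha0 : a 0 = 0)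
    (hapos : ∀ n, 1 ≤ n → 0 < a n)
    (hrec : ∀ n : ℕ, 1 ≤ n →
      q ^ (n - 1) * (1 - q ^ n)
        = (a n) ^ 2 * ((a (n + 1)) ^ 2 + q ^ (1 - (n : ℤ)) * (a n) ^ 2
          + q ^ 2 * (a (n - 1)) ^ 2
          + q ^ (3 - 2 * (n : ℤ)) * (a (n + 1)) ^ 2 * (a n) ^ 2 * (a (n - 1)) ^ 2)) :
    (∀ n : ℕ, 1 ≤ n → (a n) ^ 4 ≤ q ^ (2 * n - 2) * (1 - q ^ n)) ∧
    Tendsto (fun n : ℕ => a n) atTop (𝓝 0) ∧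
    Tendsto (fun n : ℕ => (a n) ^ 2 / q ^ (n - 1)) atTop (𝓝 1) := by
  have hqne : q ≠ 0 := hq0.ne'
  have hpne : ∀ m : ℕ, (q : ℝ) ^ m ≠ 0 := fun m => pow_ne_zero _ hqne
  set y : ℕ → ℝ := qPI_Y q a with hy
  -- rewrite y at successor indices
  have eY : ∀ m : ℕ, y (m + 1) = (a (m + 1)) ^ 2 * (q ^ m)⁻¹ := by
    intro m
    have : (1 - ((m + 1 : ℕ) : ℤ)) = -(m : ℤ) := by push_cast; ring
    rw [hy, qPI_Y, this, zpow_neg, zpow_natCast]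
  have eY' : ∀ m : ℕ, y m = (a m) ^ 2 * (q * (q ^ m)⁻¹) := by
    intro m
    rw [hy, qPI_Y, zpow_sub₀ hqne, zpow_one, zpow_natCast, div_eq_mul_inv]
  have hy_nonneg : ∀ n, 0 ≤ y n := fun n =>
    mul_nonneg (sq_nonneg _) (zpow_pos hq0 _).le
  -- key identity
  have hid : ∀ m : ℕ,
      1 - (y (m + 1)) ^ 2
        = q ^ (m + 1) * ((1 + y (m + 2) * y (m + 1)) * (1 + y m * y (m + 1))) := by
    intro m
    have H := hrec (m + 1) (Nat.le_add_left 1 m)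
    simp only [Nat.add_sub_cancel] at H
    have e1 : q ^ (1 - ((m + 1 : ℕ) : ℤ)) = (q ^ m)⁻¹ := by
      rw [show (1 - ((m + 1 : ℕ) : ℤ)) = -(m : ℤ) by push_cast; ring, zpow_neg, zpow_natCast]
    have e2 : q ^ (3 - 2 * ((m + 1 : ℕ) : ℤ)) = q * ((q ^ m)⁻¹) ^ 2 := by
      rw [show (3 - 2 * ((m + 1 : ℕ) : ℤ)) = 1 - (m : ℤ) - (m : ℤ) by push_cast; ring,
        zpow_sub₀ hqne, zpow_sub₀ hqne, zpow_one, zpow_natCast]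
      field_simp
    rw [e1, e2] at H
    have H' : q ^ m * (1 - q * q ^ m)
        = (a (m + 1)) ^ 2 * ((a (m + 2)) ^ 2 + ((q ^ m)⁻¹) * (a (m + 1)) ^ 2
          + q ^ 2 * (a m) ^ 2
          + (q * ((q ^ m)⁻¹) ^ 2) * (a (m + 2)) ^ 2 * (a (m + 1)) ^ 2 * (a m) ^ 2) := by
      rw [show q * q ^ m = q ^ (m + 1) by ring]
      linear_combination H
    have hcore := qPI_core q (q ^ m) ((a (m + 1)) ^ 2) ((a (m + 2)) ^ 2) ((a m) ^ 2)
      hqne (hpne m) (by linear_combination H')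
    rw [eY (m + 1), eY m, eY']
    calc 1 - ((a (m + 1)) ^ 2 * (q ^ m)⁻¹) ^ 2
        = (q ^ m * q) * ((1 + ((a (m + 2)) ^ 2 * (q ^ m * q)⁻¹) * ((a (m + 1)) ^ 2 * (q ^ m)⁻¹))
            * (1 + ((a m) ^ 2 * (q * (q ^ m)⁻¹)) * ((a (m + 1)) ^ 2 * (q ^ m)⁻¹))) := by
          linear_combination hcore
      _ = q ^ (m + 1) * ((1 + (a (m + 2)) ^ 2 * (q ^ (m + 1))⁻¹ * ((a (m + 1)) ^ 2 * (q ^ m)⁻¹))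
            * (1 + (a m) ^ 2 * (q * (q ^ m)⁻¹) * ((a (m + 1)) ^ 2 * (q ^ m)⁻¹))) := by
          rw [pow_succ]; ring_nf
  -- upper bound on y²
  have hyub : ∀ m : ℕ, (y (m + 1)) ^ 2 ≤ 1 - q ^ (m + 1) := by
    intro m
    have h := hid m
    nlinarith [mul_nonneg (hy_nonneg (m + 2)) (hy_nonneg (m + 1)),
      mul_nonneg (hy_nonneg m) (hy_nonneg (m + 1)), pow_pos hq0 (m + 1),
      mul_nonneg (mul_nonneg (hy_nonneg (m + 2)) (hy_nonneg (m + 1)))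
        (mul_nonneg (hy_nonneg m) (hy_nonneg (m + 1)))]
  have hyle1 : ∀ n : ℕ, y n ≤ 1 := by
    intro n
    match n with
    | 0 => rw [eY' 0]; simp [ha0]
    | (m + 1) =>
      have h1 := hyub m
      have h2 := pow_pos hq0 (m + 1)
      nlinarith [hy_nonneg (m + 1)]
  -- lower bound on y²
  have hylb : ∀ m : ℕ, 1 - 4 * q ^ (m + 1) ≤ (y (m + 1)) ^ 2 := by
    intro m
    have h := hid m
    have f1 : (1 + y (m + 2) * y (m + 1)) ≤ 2 := by
      nlinarith [hyle1 (m + 2), hyle1 (m + 1), hy_nonneg (m + 2), hy_nonneg (m + 1)]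
    have f2 : (1 + y m * y (m + 1)) ≤ 2 := by
      nlinarith [hyle1 m, hyle1 (m + 1), hy_nonneg m, hy_nonneg (m + 1)]
    have f1' : (0:ℝ) ≤ 1 + y (m + 2) * y (m + 1) := by
      nlinarith [mul_nonneg (hy_nonneg (m + 2)) (hy_nonneg (m + 1))]
    have f2' : (0:ℝ) ≤ 1 + y m * y (m + 1) := by
      nlinarith [mul_nonneg (hy_nonneg m) (hy_nonneg (m + 1))]
    have hq : (0:ℝ) < q ^ (m + 1) := pow_pos hq0 _
    have hprod : (1 + y (m + 2) * y (m + 1)) * (1 + y m * y (m + 1)) ≤ 4 := by nlinarith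
    have := mul_le_mul_of_nonneg_left hprod hq.le
    nlinarith
  -- part 1
  have part1 : ∀ n : ℕ, 1 ≤ n → (a n) ^ 4 ≤ q ^ (2 * n - 2) * (1 - q ^ n) := by
    intro n hn
    obtain ⟨m, rfl⟩ : ∃ m, n = m + 1 := ⟨n - 1, by omega⟩
    have h2 : 2 * (m + 1) - 2 = 2 * m := by omega
    rw [h2]
    have hA : (a (m + 1)) ^ 2 = y (m + 1) * q ^ m := by
      rw [eY m]; field_simp
    have h4 : (a (m + 1)) ^ 4 = (y (m + 1)) ^ 2 * q ^ (2 * m) := by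
      rw [pow_mul, show (4:ℕ) = 2 * 2 by rfl, pow_mul, hA]; ring
    rw [h4]
    have h5 := mul_le_mul_of_nonneg_right (hyub m) (pow_pos hq0 (2 * m)).le
    linarith
  -- a n ^ 2 ≤ q ^ (n-1)
  have hsq_le : ∀ n : ℕ, (a n) ^ 2 ≤ q ^ (n - 1) := by
    intro n
    match n with
    | 0 => simp [ha0]
    | (m + 1) =>
      have hA : (a (m + 1)) ^ 2 = y (m + 1) * q ^ m := by
        rw [eY m]; field_simp
      simp only [Nat.add_sub_cancel]
      rw [hA]
      nlinarith [hyle1 (m + 1), pow_pos hq0 m]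
  have ha_nonneg : ∀ n, 0 ≤ a n := by
    intro n
    match n with
    | 0 => simp [ha0]
    | (m + 1) => exact (hapos (m + 1) (Nat.le_add_left 1 m)).le
  -- part 2
  have hq_tend : Tendsto (fun n : ℕ => q ^ (n - 1)) atTop (𝓝 0) :=
    (tendsto_pow_atTop_nhds_zero_of_lt_one hq0.le hq1).comp (Filter.tendsto_sub_atTop_nat 1)
  have hsq_tend : Tendsto (fun n : ℕ => (a n) ^ 2) atTop (𝓝 0) :=
    squeeze_zero (fun n => sq_nonneg _) hsq_le hq_tend
  have part2 : Tendsto (fun n : ℕ => a n) atTop (𝓝 0) := by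
    have h := (Real.continuous_sqrt.tendsto 0).comp hsq_tend
    simp only [Function.comp_def, Real.sqrt_zero] at h
    refine h.congr fun n => ?_
    exact Real.sqrt_sq (ha_nonneg n)
  -- part 3
  have hy2_tend : Tendsto (fun n : ℕ => (y n) ^ 2) atTop (𝓝 1) := by
    have hlow : Tendsto (fun n : ℕ => 1 - 4 * q ^ n) atTop (𝓝 1) := by
      have h1 := (tendsto_pow_atTop_nhds_zero_of_lt_one hq0.le hq1).const_mul (4:ℝ)
      have h2 := (tendsto_const_nhds : Tendsto (fun _ : ℕ => (1:ℝ)) atTop (𝓝 1)).sub h1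
      simpa using h2
    have hup : Tendsto (fun n : ℕ => 1 - q ^ n) atTop (𝓝 1) := by
      have h2 := (tendsto_const_nhds : Tendsto (fun _ : ℕ => (1:ℝ)) atTop (𝓝 1)).sub
        (tendsto_pow_atTop_nhds_zero_of_lt_one hq0.le hq1)
      simpa using h2
    refine tendsto_of_tendsto_of_tendsto_of_le_of_le' hlow hup ?_ ?_
    · filter_upwards [eventually_ge_atTop 1] with n hn
      obtain ⟨m, rfl⟩ : ∃ m, n = m + 1 := ⟨n - 1, by omega⟩
      exact hylb m
    · filter_upwards [eventually_ge_atTop 1] with n hn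
      obtain ⟨m, rfl⟩ : ∃ m, n = m + 1 := ⟨n - 1, by omega⟩
      have := hyub m
      nlinarith [pow_pos hq0 (m + 1)]
  have hy_tend : Tendsto (fun n : ℕ => y n) atTop (𝓝 1) := by
    have h := (Real.continuous_sqrt.tendsto 1).comp hy2_tend
    simp only [Function.comp_def, Real.sqrt_one] at h
    refine h.congr fun n => ?_
    exact Real.sqrt_sq (hy_nonneg n)
  refine ⟨part1, part2, ?_⟩
  refine hy_tend.congr' ?_
  filter_upwards [eventually_ge_atTop 1] with n hn
  obtain ⟨m, rfl⟩ : ∃ m, n = m + 1 := ⟨n - 1, by omega⟩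
  simp only [Nat.add_sub_cancel]
  rw [eY m, div_eq_mul_inv]
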